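/- One has (U^{(ε)})² = (W_J(τ^{(ε)2}) / τ^{(ε)}(w_J)) · U^{(ε)}, where W_J(τ^{(ε)2}) := ∑_{w∈W_J} τ^{(ε)}(w)². Moreover, if * : H → H is an involutive ring anti-automorphism that is semilinear over an involutive field automorphism * of K satisfying τ(w)* = τ(w)^{-1} for all w ∈ W_J, and if T(w)* = T(w)^{-1} for all w ∈ W_J, then (U^{(ε)})* = U^{(ε)}. -/

import Mathlib

open CoxeterSystem List

section Aux

variable {J : Type*} {W : Type*} [Group W] [DecidableEq W] {M : CoxeterMatrix J}
  (cs : CoxeterSystem M W)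

namespace CoxSym

lemma conj_eq_iff (a b c t : W) : a * t * b = c ↔ t = a⁻¹ * c * b⁻¹ := by
  constructor
  · intro h
    have : t = a⁻¹ * (a * t * b) * b⁻¹ := by group
    rw [h] at this; exact this
  · rintro rfl; group

def flipFun (i : J) : W × ℤˣ → W × ℤˣ :=
  fun p => (cs.simple i * p.1 * cs.simple i, if p.1 = cs.simple i then -p.2 else p.2)

lemma flipFun_invol (i : J) : Function.Involutive (flipFun cs i) := by
  rintro ⟨t, e⟩
  simp only [flipFun]
  have h1 : cs.simple i * (cs.simple i * t * cs.simple i) * cs.simple i = t := by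
    rw [show cs.simple i * (cs.simple i * t * cs.simple i) * cs.simple i
        = (cs.simple i * cs.simple i) * t * (cs.simple i * cs.simple i) by group,
      cs.simple_mul_simple_self]
    simp
  have h2 : (cs.simple i * t * cs.simple i = cs.simple i) ↔ t = cs.simple i := by
    rw [conj_eq_iff, cs.inv_simple,
      show cs.simple i * cs.simple i * cs.simple i = (cs.simple i * cs.simple i) * cs.simple i
        from rfl, cs.simple_mul_simple_self, one_mul]
  rw [h1]
  rcases eq_or_ne t (cs.simple i) with ht | ht
  · rw [if_pos ht, if_pos (h2.mpr ht), neg_neg]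
  · rw [if_neg ht, if_neg (fun h => ht (h2.mp h))]

def flipPerm (i : J) : Equiv.Perm (W × ℤˣ) := (flipFun_invol cs i).toPerm

lemma flipPerm_apply (i : J) (p : W × ℤˣ) : flipPerm cs i p = flipFun cs i p := rfl

lemma flip_liftable : M.IsLiftable (flipPerm cs) := by
  intro i i'
  set m := M i i' with hm
  set p : W := cs.simple i * cs.simple i' with hp
  have hpm : p ^ m = 1 := cs.simple_mul_simple_pow i i'
  have hconj : cs.simple i' * p * (cs.simple i')⁻¹ = p⁻¹ := by
    rw [hp, cs.inv_simple, mul_inv_rev, cs.inv_simple, cs.inv_simple,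
      show cs.simple i' * (cs.simple i * cs.simple i') * cs.simple i'
        = cs.simple i' * cs.simple i * (cs.simple i' * cs.simple i') by group,
      cs.simple_mul_simple_self]
    simp
  have hcomm : ∀ k : ℤ, cs.simple i' * p ^ k = p ^ (-k) * cs.simple i' := by
    intro k
    have : (MulAut.conj (cs.simple i')) (p ^ k) = p ^ (-k) := by
      rw [map_zpow, MulAut.conj_apply, hconj, ← zpow_neg_one, ← zpow_mul]
      ring_nf
    have h2 := congrArg (fun x => x * cs.simple i') this
    simp only [MulAut.conj_apply, cs.inv_simple] at h2
    rw [show cs.simple i' * p ^ k * cs.simple i' * cs.simple i'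
        = cs.simple i' * p ^ k * (cs.simple i' * cs.simple i') by group,
      cs.simple_mul_simple_self, mul_one] at h2
    exact h2
  have hinvp : p⁻¹ * cs.simple i' = cs.simple i' * cs.simple i * cs.simple i' := by
    rw [hp, mul_inv_rev, cs.inv_simple, cs.inv_simple]
  set ν : Equiv.Perm (W × ℤˣ) := flipPerm cs i * flipPerm cs i' with hν
  have hνapp : ∀ t : W, ∀ e : ℤˣ, ν (t, e) =
      (p * t * p⁻¹, e * ((if t = cs.simple i' then (-1 : ℤˣ) else 1) *
        (if t = p⁻¹ * cs.simple i' then (-1 : ℤˣ) else 1))) := by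
    intro t e
    rw [hν, Equiv.Perm.mul_apply, flipPerm_apply, flipPerm_apply]
    simp only [flipFun]
    have hfst : cs.simple i * (cs.simple i' * t * cs.simple i') * cs.simple i
        = p * t * p⁻¹ := by
      rw [hp, mul_inv_rev, cs.inv_simple, cs.inv_simple]
      group
    have hcond : (cs.simple i' * t * cs.simple i' = cs.simple i) ↔
        t = p⁻¹ * cs.simple i' := by
      rw [conj_eq_iff, cs.inv_simple, hinvp]
    rw [Prod.mk.injEq]
    refine ⟨hfst, ?_⟩
    rcases eq_or_ne t (cs.simple i') with h1 | h1 <;>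
      rcases eq_or_ne t (p⁻¹ * cs.simple i') with h2 | h2
    · rw [if_pos h1, if_pos h1, if_pos h2, if_pos (hcond.mpr h2), neg_neg]
      simp
    · rw [if_pos h1, if_pos h1, if_neg h2, if_neg (fun h => h2 (hcond.mp h))]
      simp
    · rw [if_neg h1, if_neg h1, if_pos h2, if_pos (hcond.mpr h2)]
      simp
    · rw [if_neg h1, if_neg h1, if_neg h2, if_neg (fun h => h2 (hcond.mp h))]
      simp
  have hiter : ∀ (k : ℕ) (t : W) (e : ℤˣ), (ν ^ k) (t, e) =
      (p ^ (k : ℤ) * t * p ^ (-(k : ℤ)),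
        e * ∏ n ∈ Finset.range (2 * k),
          (if t = p ^ (-(n : ℤ)) * cs.simple i' then (-1 : ℤˣ) else 1)) := by
    intro k
    induction k with
    | zero => intro t e; simp
    | succ k ih =>
      intro t e
      rw [pow_succ', Equiv.Perm.mul_apply, ih t e, hνapp]
      have key1 : (p ^ ((k:ℤ)))⁻¹ * cs.simple i' * (p ^ (-(k : ℤ)))⁻¹
          = p ^ (-(((2 * k : ℕ)) : ℤ)) * cs.simple i' := by
        have : (p ^ ((k:ℤ)))⁻¹ * cs.simple i' * (p ^ (-(k : ℤ)))⁻¹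
            = p ^ (-(k:ℤ)) * (cs.simple i' * p ^ ((k:ℤ))) := by group
        rw [this, hcomm]
        push_cast
        group
      have key2 : (p ^ ((k:ℤ)))⁻¹ * (p⁻¹ * cs.simple i') * (p ^ (-(k : ℤ)))⁻¹
          = p ^ (-(((2 * k + 1 : ℕ)) : ℤ)) * cs.simple i' := by
        have : (p ^ ((k:ℤ)))⁻¹ * (p⁻¹ * cs.simple i') * (p ^ (-(k : ℤ)))⁻¹
            = p ^ (-(k:ℤ)) * p⁻¹ * (cs.simple i' * p ^ ((k:ℤ))) := by group
        rw [this, hcomm]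
        push_cast
        group
      have c1 : (p ^ (k : ℤ) * t * p ^ (-(k : ℤ)) = cs.simple i') ↔
          t = p ^ (-(((2 * k : ℕ)) : ℤ)) * cs.simple i' := by
        rw [conj_eq_iff, key1]
      have c2 : (p ^ (k : ℤ) * t * p ^ (-(k : ℤ)) = p⁻¹ * cs.simple i') ↔
          t = p ^ (-(((2 * k + 1 : ℕ)) : ℤ)) * cs.simple i' := by
        rw [conj_eq_iff, key2]
      rw [Prod.mk.injEq]
      constructor
      · push_cast
        group
      · rw [show 2 * (k + 1) = (2 * k + 1) + 1 by ring, Finset.prod_range_succ,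
          Finset.prod_range_succ]
        simp only [c1, c2]
        group
  ext ⟨t, e⟩
  · rw [hiter m t e]
    simp only [Equiv.Perm.one_apply]
    rw [zpow_natCast, hpm, zpow_neg, zpow_natCast, hpm]
    simp
  · rw [hiter m t e]
    simp only [Equiv.Perm.one_apply]
    have hps : ∀ n : ℕ, p ^ (-((m + n : ℕ) : ℤ)) = p ^ (-(n : ℤ)) := by
      intro n
      push_cast
      rw [neg_add, zpow_add, zpow_neg, zpow_natCast, hpm]
      simp
    rw [two_mul, Finset.prod_range_add]
    have heq : (∏ n ∈ Finset.range m,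
        (if t = p ^ (-((m + n : ℕ) : ℤ)) * cs.simple i' then (-1 : ℤˣ) else 1))
        = ∏ n ∈ Finset.range m,
          (if t = p ^ (-(n : ℤ)) * cs.simple i' then (-1 : ℤˣ) else 1) := by
      apply Finset.prod_congr rfl
      intro n _
      rw [hps n]
    rw [heq, ← mul_assoc]
    have : ∀ u : ℤˣ, u * u = 1 := fun u => by
      rcases Int.units_eq_one_or u with h | h <;> simp [h]
    rw [mul_assoc, this, mul_one]



noncomputable def Phi : W →* Equiv.Perm (W × ℤˣ) := cs.lift ⟨flipPerm cs, flip_liftable cs⟩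

lemma Phi_simple (i : J) : Phi cs (cs.simple i) = flipPerm cs i :=
  cs.lift_apply_simple (flip_liftable cs) i

noncomputable def eta (w t : W) : ℤˣ := (Phi cs w (t, 1)).2

lemma Phi_apply (w : W) : ∀ t : W, ∀ e : ℤˣ,
    Phi cs w (t, e) = (w * t * w⁻¹, e * eta cs w t) := by
  induction w using cs.simple_induction_left with
  | one =>
    intro t e
    simp [eta, map_one]
  | mul_simple_left w i ih =>
    intro t e
    rw [map_mul, Equiv.Perm.mul_apply, ih t e, Phi_simple, flipPerm_apply]
    have heta : eta cs (cs.simple i * w) t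
        = (if w * t * w⁻¹ = cs.simple i then -(eta cs w t) else eta cs w t) := by
      unfold eta
      rw [map_mul, Equiv.Perm.mul_apply, ih t 1, Phi_simple, flipPerm_apply]
      simp only [flipFun, one_mul]
    simp only [flipFun]
    rw [heta]
    have hfst : cs.simple i * (w * t * w⁻¹) * cs.simple i
        = (cs.simple i * w) * t * (cs.simple i * w)⁻¹ := by
      rw [mul_inv_rev, cs.inv_simple]
      group
    rcases eq_or_ne (w * t * w⁻¹) (cs.simple i) with h | h
    · rw [if_pos h, if_pos h, hfst, mul_neg]
    · rw [if_neg h, if_neg h, hfst]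

lemma eta_mul (x y t : W) :
    eta cs (x * y) t = eta cs y t * eta cs x (y * t * y⁻¹) := by
  have h1 := Phi_apply cs (x * y) t 1
  have h2 : Phi cs (x * y) (t, 1) = Phi cs x (Phi cs y (t, 1)) := by
    rw [map_mul]; rfl
  rw [Phi_apply cs y t 1, one_mul, Phi_apply cs x (y * t * y⁻¹) (eta cs y t)] at h2
  have := congrArg Prod.snd (h1.symm.trans h2)
  simpa using this

lemma eta_simple (i : J) (t : W) :
    eta cs (cs.simple i) t = if t = cs.simple i then -1 else 1 := by
  unfold eta
  rw [Phi_simple, flipPerm_apply]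
  simp only [flipFun]

lemma eta_refl_self {t : W} (ht : cs.IsReflection t) : eta cs t t = -1 := by
  obtain ⟨u, j, rfl⟩ := ht
  set t := u * cs.simple j * u⁻¹ with hd
  have hinv : eta cs u (cs.simple j) * eta cs u⁻¹ (t) = 1 := by
    have := eta_mul cs u⁻¹ u (cs.simple j)
    rw [inv_mul_cancel] at this
    have h1 : eta cs 1 (cs.simple j) = 1 := by
      unfold eta; simp [map_one]
    rw [h1, ← hd] at this
    exact this.symm
  have key : eta cs (u * (cs.simple j * u⁻¹)) t
      = eta cs (cs.simple j * u⁻¹) t * eta cs u ((cs.simple j * u⁻¹) * t * (cs.simple j * u⁻¹)⁻¹) :=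
    eta_mul cs u (cs.simple j * u⁻¹) t
  have e1 : (cs.simple j * u⁻¹) * t * (cs.simple j * u⁻¹)⁻¹ = cs.simple j := by
    rw [hd, mul_inv_rev, inv_inv, cs.inv_simple]
    rw [show cs.simple j * u⁻¹ * (u * cs.simple j * u⁻¹) * (u * cs.simple j)
        = cs.simple j * (cs.simple j * cs.simple j) by group, cs.simple_mul_simple_self, mul_one]
  have e2 : eta cs (cs.simple j * u⁻¹) t = eta cs u⁻¹ t * eta cs (cs.simple j) (u⁻¹ * t * u⁻¹⁻¹) :=
    eta_mul cs (cs.simple j) u⁻¹ t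
  have e3 : u⁻¹ * t * u⁻¹⁻¹ = cs.simple j := by
    rw [hd]; group
  have e4 : eta cs (cs.simple j) (cs.simple j) = -1 := by
    rw [eta_simple, if_pos rfl]
  rw [e1, e2, e3, e4] at key
  rw [show u * (cs.simple j * u⁻¹) = t by rw [hd]; group] at key
  rw [key]
  calc eta cs u⁻¹ t * -1 * eta cs u (cs.simple j)
      = -(eta cs u⁻¹ t * eta cs u (cs.simple j)) := by rw [mul_neg, mul_one, neg_mul]
    _ = -(eta cs u (cs.simple j) * eta cs u⁻¹ t) := by
        rw [mul_comm (eta cs u⁻¹ t) (eta cs u (cs.simple j))]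
    _ = -1 := by rw [hinv]

lemma eta_one (t : W) : eta cs 1 t = 1 := by
  unfold eta; simp [map_one]

lemma eta_wordProd (ω : List J) (t : W) :
    eta cs (cs.wordProd ω) t = (-1 : ℤˣ) ^ ((cs.rightInvSeq ω).count t) := by
  induction ω with
  | nil => simp [eta_one]
  | cons i ω ih =>
    rw [cs.wordProd_cons, eta_mul cs (cs.simple i) (cs.wordProd ω) t, ih,
      eta_simple]
    have hris : cs.rightInvSeq (i :: ω)
        = ((cs.wordProd ω)⁻¹ * cs.simple i * cs.wordProd ω) :: cs.rightInvSeq ω := rfl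
    rw [hris, List.count_cons]
    have hcond : ((cs.wordProd ω)⁻¹ * cs.simple i * cs.wordProd ω = t) ↔
        (cs.wordProd ω * t * (cs.wordProd ω)⁻¹ = cs.simple i) := by
      constructor
      · intro h; rw [← h]; group
      · intro h; rw [← h]; group
    simp only [beq_iff_eq]
    rcases eq_or_ne (cs.wordProd ω * t * (cs.wordProd ω)⁻¹) (cs.simple i) with h | h
    · rw [if_pos h, if_pos (hcond.mpr h), pow_succ]
    · rw [if_neg h, if_neg (fun hc => h (hcond.mp hc)), add_zero, mul_one]

lemma mem_ris_of_eta {ω : List J} {t : W} (h : eta cs (cs.wordProd ω) t = -1) :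
    t ∈ cs.rightInvSeq ω := by
  rw [eta_wordProd] at h
  by_contra hmem
  rw [List.count_eq_zero_of_not_mem hmem, pow_zero] at h
  exact absurd h (by decide)

lemma inversion_of_eta {w t : W} (h : eta cs w t = -1) :
    cs.length (w * t) < cs.length w := by
  obtain ⟨ω, hred, rfl⟩ := cs.exists_reduced_word' w
  exact (cs.isRightInversion_of_mem_rightInvSeq hred (mem_ris_of_eta cs h)).2

lemma eta_of_inversion {w t : W} (ht : cs.IsReflection t)
    (h : cs.length (w * t) < cs.length w) : eta cs w t = -1 := by
  have hw : w * t * t = w := by rw [mul_assoc, ht.mul_self, mul_one]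
  have hdec : eta cs (w * t * t) t = eta cs t t * eta cs (w * t) (t * t * t⁻¹) :=
    eta_mul cs (w * t) t t
  have htt : t * t * t⁻¹ = t := by group
  have h2 : eta cs (w * t) t = 1 := by
    rcases Int.units_eq_one_or (eta cs (w * t) t) with h3 | h3
    · exact h3
    · exfalso
      have := inversion_of_eta cs h3
      rw [hw] at this
      omega
  rw [hw, htt, h2, mul_one, eta_refl_self cs ht] at hdec
  exact hdec

lemma eta_iff_inversion {w t : W} (ht : cs.IsReflection t) :
    eta cs w t = -1 ↔ cs.length (w * t) < cs.length w :=
  ⟨inversion_of_eta cs, eta_of_inversion cs ht⟩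

open scoped Classical in
lemma card_inversions [Fintype W] (w : W) :
    (Finset.univ.filter (fun t => cs.IsRightInversion w t)).card = cs.length w := by
  obtain ⟨ω, hred, rfl⟩ := cs.exists_reduced_word' w
  have hset : Finset.univ.filter (fun t => cs.IsRightInversion (cs.wordProd ω) t)
      = (cs.rightInvSeq ω).toFinset := by
    ext t
    simp only [Finset.mem_filter, Finset.mem_univ, true_and, List.mem_toFinset]
    constructor
    · intro hinv
      exact mem_ris_of_eta cs (eta_of_inversion cs hinv.1 hinv.2)
    · exact fun hmem => cs.isRightInversion_of_mem_rightInvSeq hred hmem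
  rw [hset, List.toFinset_card_of_nodup hred.nodup_rightInvSeq, cs.length_rightInvSeq, ← hred]

open scoped Classical in
lemma length_add_of_max [Fintype W] {u : W} (hu : ∀ w : W, cs.length w ≤ cs.length u)
    {v w : W} (hvw : v * w = u) : cs.length v + cs.length w = cs.length u := by
  have hrefl_inv : ∀ t : W, cs.IsReflection t → cs.IsRightInversion u t := by
    intro t ht
    exact ⟨ht, lt_of_le_of_ne (hu (u * t)) (ht.length_mul_left_ne u)⟩
  set R : Finset W := Finset.univ.filter (fun t => cs.IsReflection t) with hR
  have hRcard : R.card = cs.length u := by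
    have : R = Finset.univ.filter (fun t => cs.IsRightInversion u t) := by
      ext t
      simp only [hR, Finset.mem_filter, Finset.mem_univ, true_and]
      exact ⟨fun h => hrefl_inv t h, fun h => h.1⟩
    rw [this, card_inversions]
  set A : Finset W := Finset.univ.filter (fun t => cs.IsRightInversion w t) with hA
  set B : Finset W := Finset.univ.filter
    (fun t => cs.IsReflection t ∧ cs.IsRightInversion v (w * t * w⁻¹)) with hB
  have hAcard : A.card = cs.length w := card_inversions cs w
  have hBcard : B.card = cs.length v := by
    rw [← card_inversions cs v]
    apply Finset.card_bij (fun t _ => w * t * w⁻¹)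
    · intro t ht
      simp only [hB, Finset.mem_filter, Finset.mem_univ, true_and] at ht
      simp only [Finset.mem_filter, Finset.mem_univ, true_and]
      exact ht.2
    · intro t1 h1 t2 h2 heq
      have := congrArg (fun x => w⁻¹ * x * w) heq
      simpa [mul_assoc] using this
    · intro r hr
      simp only [Finset.mem_filter, Finset.mem_univ, true_and] at hr
      refine ⟨w⁻¹ * r * w, ?_, by group⟩
      simp only [hB, Finset.mem_filter, Finset.mem_univ, true_and]
      constructor
      · have := hr.1.conj w⁻¹
        simpa using this
      · rw [show w * (w⁻¹ * r * w) * w⁻¹ = r by group]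
        exact hr
  -- split of eta
  have hsplit : ∀ t : W, cs.IsReflection t →
      (t ∈ A ∧ t ∉ B) ∨ (t ∉ A ∧ t ∈ B) := by
    intro t ht
    have hetau : eta cs u t = -1 := by
      rw [eta_iff_inversion cs ht]
      exact (hrefl_inv t ht).2
    rw [← hvw, eta_mul cs v w t] at hetau
    have hmemA : t ∈ A ↔ eta cs w t = -1 := by
      simp only [hA, Finset.mem_filter, Finset.mem_univ, true_and]
      rw [eta_iff_inversion cs ht]
      exact ⟨fun h => h.2, fun h => ⟨ht, h⟩⟩
    have hmemB : t ∈ B ↔ eta cs v (w * t * w⁻¹) = -1 := by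
      simp only [hB, Finset.mem_filter, Finset.mem_univ, true_and]
      rw [eta_iff_inversion cs (ht.conj w)]
      exact ⟨fun h => h.2.2, fun h => ⟨ht, ht.conj w, h⟩⟩
    rcases Int.units_eq_one_or (eta cs w t) with h1 | h1 <;>
      rcases Int.units_eq_one_or (eta cs v (w * t * w⁻¹)) with h2 | h2 <;>
      rw [h1, h2] at hetau
    · exact absurd hetau (by decide)
    · right
      exact ⟨fun hc => absurd (hmemA.mp hc) (by rw [h1]; decide), hmemB.mpr h2⟩
    · left
      exact ⟨hmemA.mpr h1, fun hc => absurd (hmemB.mp hc) (by rw [h2]; decide)⟩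
    · exact absurd hetau (by decide)
  have hsubA : A ⊆ R := by
    intro t ht
    simp only [hA, Finset.mem_filter, Finset.mem_univ, true_and] at ht
    simp only [hR, Finset.mem_filter, Finset.mem_univ, true_and]
    exact ht.1
  have hsubB : B ⊆ R := by
    intro t ht
    simp only [hB, Finset.mem_filter, Finset.mem_univ, true_and] at ht
    simp only [hR, Finset.mem_filter, Finset.mem_univ, true_and]
    exact ht.1
  have hunion : R = A ∪ B := by
    apply Finset.Subset.antisymm
    · intro t ht
      simp only [hR, Finset.mem_filter, Finset.mem_univ, true_and] at ht
      rcases hsplit t ht with ⟨h1, _⟩ | ⟨_, h2⟩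
      · exact Finset.mem_union_left _ h1
      · exact Finset.mem_union_right _ h2
    · intro t ht
      rcases Finset.mem_union.mp ht with h | h
      · exact hsubA h
      · exact hsubB h
  have hdisj : Disjoint A B := by
    rw [Finset.disjoint_left]
    intro t htA htB
    have ht : cs.IsReflection t := by
      have := hsubA htA
      simpa only [hR, Finset.mem_filter, Finset.mem_univ, true_and] using this
    rcases hsplit t ht with ⟨_, h⟩ | ⟨h, _⟩
    · exact h htB
    · exact h htA
  have : cs.length u = A.card + B.card := by
    rw [← hRcard, hunion, Finset.card_union_of_disjoint hdisj]
  rw [this, hAcard, hBcard]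
  omega

/-- additivity of length at a maximal-length element -/
lemma length_add_of_max' [Fintype W] {u : W} (hu : ∀ w : W, cs.length w ≤ cs.length u)
    (w : W) : cs.length w + cs.length (w⁻¹ * u) = cs.length u :=
  length_add_of_max cs hu (by group)


section Hecke

variable {K : Type*} [Field K] {H : Type*} [Ring H] [Algebra K H]
variable (τε : W → Kˣ) (T : W → Hˣ)

/-- quadratic relation in smul form -/
def Quad : Prop := ∀ j : J, (T (cs.simple j) : H) * (T (cs.simple j) : H)
  = 1 + ((τε (cs.simple j) : K) - (((τε (cs.simple j))⁻¹ : Kˣ) : K)) • (T (cs.simple j) : H)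

/-- multiplicativity hypotheses -/
def MulHyp {G : Type*} [Monoid G] (P : W → G) : Prop :=
  ∀ v w : W, cs.length (v * w) = cs.length v + cs.length w → P (v * w) = P v * P w

lemma mulHyp_one {G : Type*} [Group G] {P : W → G} (hP : MulHyp cs P) : P 1 = 1 := by
  have := hP 1 1 (by simp)
  rw [mul_one] at this
  exact (mul_left_cancel (a := P 1) (by rw [mul_one, ← this])).symm

variable {cs τε T}

lemma mulHyp_simple_left {G : Type*} [Monoid G] {P : W → G} (hP : MulHyp cs P)
    {j : J} {w : W} (hw : cs.length (cs.simple j * w) = cs.length w + 1) :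
    P (cs.simple j * w) = P (cs.simple j) * P w :=
  hP (cs.simple j) w (by rw [cs.length_simple]; omega)

lemma mulHyp_simple_right {G : Type*} [Monoid G] {P : W → G} (hP : MulHyp cs P)
    {j : J} {w : W} (hw : cs.length (w * cs.simple j) = cs.length w + 1) :
    P (w * cs.simple j) = P w * P (cs.simple j) :=
  hP w (cs.simple j) (by rw [cs.length_simple]; omega)

variable [Fintype W]

/-- the unnormalised symmetriser -/
noncomputable def Sym (τε : W → Kˣ) (T : W → Hˣ) : H := ∑ w : W, (τε w : K) • (T w : H)

lemma eigen_left (hτε : MulHyp cs τε) (hT : MulHyp cs T) (hq : Quad cs τε T) (j : J) :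
    (T (cs.simple j) : H) * Sym τε T = (τε (cs.simple j) : K) • Sym τε T := by
  classical
  set σ := cs.simple j with hσ
  have hcancel : ∀ u : W, σ * (σ * u) = u := fun u => by
    rw [hσ]; exact cs.simple_mul_simple_cancel_left j
  set x : H := (T σ : H) with hx
  set ts : K := (τε σ : K) with hts
  set tsi : K := (((τε σ)⁻¹ : Kˣ) : K) with htsi
  have hinv : ts * tsi = 1 := by
    rw [hts, htsi, ← Units.val_mul, mul_inv_cancel, Units.val_one]
  have hsq : x * x = 1 + (ts - tsi) • x := hq j
  set f : W → H := fun w => (τε w : K) • (T w : H) with hf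
  set g : W → H := fun w => x * f w - ts • f w with hg
  have hzero : ∑ w : W, g w = 0 := by
    set D : Finset W := Finset.univ.filter (fun w => cs.length (σ * w) = cs.length w + 1)
      with hD
    have hsplit := Finset.sum_filter_add_sum_filter_not Finset.univ
      (fun w => cs.length (σ * w) = cs.length w + 1) g
    have hbij : ∑ w ∈ Finset.univ.filter
        (fun w => ¬ (cs.length (σ * w) = cs.length w + 1)), g w
        = ∑ w ∈ D, g (σ * w) := by
      apply Finset.sum_equiv (Equiv.mulLeft σ)
      · intro w
        simp only [Finset.mem_filter, Finset.mem_univ, true_and, hD, Equiv.coe_mulLeft]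
        constructor
        · intro hw
          rcases cs.length_simple_mul w j with h | h
          · exact absurd h hw
          · rw [← hσ] at h
            rw [hcancel]
            omega
        · intro hw hcon
          rw [hcancel] at hw
          omega
      · intro w _
        simp only [Equiv.coe_mulLeft, hcancel]
    have hpair : ∀ w ∈ D, g w + g (σ * w) = 0 := by
      intro w hw
      simp only [hD, Finset.mem_filter, Finset.mem_univ, true_and] at hw
      have hfs : f (σ * w) = (ts * (τε w : K)) • (x * (T w : H)) := by
        simp only [hf]
        have h1 : τε (σ * w) = τε σ * τε w := mulHyp_simple_left hτε hw
        have h2 : T (σ * w) = T σ * T w := mulHyp_simple_left hT hw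
        rw [h1, h2, Units.val_mul, Units.val_mul]
      set y : H := (T w : H) with hy
      set tw : K := (τε w : K) with htw
      have hfw : f w = tw • y := rfl
      simp only [hg]
      rw [hfs, hfw]
      rw [mul_smul_comm, mul_smul_comm, ← mul_assoc, hsq]
      rw [add_mul, one_mul, smul_mul_assoc]
      rw [show (y + (ts - tsi) • (x * y)) = y + (ts - tsi) • (x * y) from rfl]
      match_scalars
      · linear_combination (- tw) * hinv
      · ring
    calc ∑ w : W, g w
        = ∑ w ∈ D, g w + ∑ w ∈ Finset.univ.filter
            (fun w => ¬ (cs.length (σ * w) = cs.length w + 1)), g w := hsplit.symm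
      _ = ∑ w ∈ D, (g w + g (σ * w)) := by rw [hbij, Finset.sum_add_distrib]
      _ = 0 := Finset.sum_eq_zero hpair
  have hsum : ∑ w : W, g w = x * Sym τε T - ts • Sym τε T := by
    rw [hg, Sym]
    rw [Finset.sum_sub_distrib, ← Finset.mul_sum, ← Finset.smul_sum]
  rw [hsum] at hzero
  exact sub_eq_zero.mp hzero

lemma eigen_right (hτε : MulHyp cs τε) (hT : MulHyp cs T) (hq : Quad cs τε T) (j : J) :
    Sym τε T * (T (cs.simple j) : H) = (τε (cs.simple j) : K) • Sym τε T := by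
  classical
  set σ := cs.simple j with hσ
  have hcancel : ∀ u : W, u * σ * σ = u := fun u => by
    rw [hσ]; exact cs.simple_mul_simple_cancel_right j
  set x : H := (T σ : H) with hx
  set ts : K := (τε σ : K) with hts
  set tsi : K := (((τε σ)⁻¹ : Kˣ) : K) with htsi
  have hinv : ts * tsi = 1 := by
    rw [hts, htsi, ← Units.val_mul, mul_inv_cancel, Units.val_one]
  have hsq : x * x = 1 + (ts - tsi) • x := hq j
  set f : W → H := fun w => (τε w : K) • (T w : H) with hf
  set g : W → H := fun w => f w * x - ts • f w with hg
  have hzero : ∑ w : W, g w = 0 := by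
    set D : Finset W := Finset.univ.filter (fun w => cs.length (w * σ) = cs.length w + 1)
      with hD
    have hsplit := Finset.sum_filter_add_sum_filter_not Finset.univ
      (fun w => cs.length (w * σ) = cs.length w + 1) g
    have hbij : ∑ w ∈ Finset.univ.filter
        (fun w => ¬ (cs.length (w * σ) = cs.length w + 1)), g w
        = ∑ w ∈ D, g (w * σ) := by
      apply Finset.sum_equiv (Equiv.mulRight σ)
      · intro w
        simp only [Finset.mem_filter, Finset.mem_univ, true_and, hD, Equiv.coe_mulRight]
        constructor
        · intro hw
          rcases cs.length_mul_simple w j with h | h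
          · exact absurd h hw
          · rw [← hσ] at h
            rw [hcancel]
            omega
        · intro hw hcon
          rw [hcancel] at hw
          omega
      · intro w _
        simp only [Equiv.coe_mulRight, hcancel]
    have hpair : ∀ w ∈ D, g w + g (w * σ) = 0 := by
      intro w hw
      simp only [hD, Finset.mem_filter, Finset.mem_univ, true_and] at hw
      have hfs : f (w * σ) = ((τε w : K) * ts) • ((T w : H) * x) := by
        simp only [hf]
        have h1 : τε (w * σ) = τε w * τε σ := mulHyp_simple_right hτε hw
        have h2 : T (w * σ) = T w * T σ := mulHyp_simple_right hT hw
        rw [h1, h2, Units.val_mul, Units.val_mul]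
      set y : H := (T w : H) with hy
      set tw : K := (τε w : K) with htw
      have hfw : f w = tw • y := rfl
      simp only [hg]
      rw [hfs, hfw]
      rw [smul_mul_assoc, smul_mul_assoc, mul_assoc, hsq]
      rw [mul_add, mul_one, mul_smul_comm]
      match_scalars
      · linear_combination (- tw) * hinv
      · ring
    calc ∑ w : W, g w
        = ∑ w ∈ D, g w + ∑ w ∈ Finset.univ.filter
            (fun w => ¬ (cs.length (w * σ) = cs.length w + 1)), g w := hsplit.symm
      _ = ∑ w ∈ D, (g w + g (w * σ)) := by rw [hbij, Finset.sum_add_distrib]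
      _ = 0 := Finset.sum_eq_zero hpair
  have hsum : ∑ w : W, g w = Sym τε T * x - ts • Sym τε T := by
    rw [hg, Sym]
    rw [Finset.sum_sub_distrib, ← Finset.sum_mul, ← Finset.smul_sum]
  rw [hsum] at hzero
  exact sub_eq_zero.mp hzero

lemma eigen_left_word (hτε : MulHyp cs τε) (hT : MulHyp cs T) (hq : Quad cs τε T)
    (ω : List J) (hred : cs.IsReduced ω) :
    (T (cs.wordProd ω) : H) * Sym τε T = (τε (cs.wordProd ω) : K) • Sym τε T := by
  induction ω with
  | nil =>
    rw [cs.wordProd_nil, mulHyp_one cs hT, mulHyp_one cs hτε]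
    simp
  | cons i ω ih =>
    have hred' : cs.IsReduced ω := by
      have := hred.drop 1
      simpa using this
    have hlen : cs.length (cs.simple i * cs.wordProd ω) = cs.length (cs.wordProd ω) + 1 := by
      have h1 : cs.length (cs.wordProd (i :: ω)) = (i :: ω).length := hred
      have h2 : cs.length (cs.wordProd ω) = ω.length := hred'
      rw [cs.wordProd_cons] at h1
      rw [h1, h2]
      simp
    rw [cs.wordProd_cons, mulHyp_simple_left hT hlen, mulHyp_simple_left hτε hlen,
      Units.val_mul, Units.val_mul, mul_assoc, ih hred', mul_smul_comm,
      eigen_left hτε hT hq i, smul_smul, mul_comm]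

lemma eigen_right_word (hτε : MulHyp cs τε) (hT : MulHyp cs T) (hq : Quad cs τε T)
    (ω : List J) (hred : cs.IsReduced ω) :
    Sym τε T * (T (cs.wordProd ω) : H) = (τε (cs.wordProd ω) : K) • Sym τε T := by
  induction ω using List.reverseRecOn with
  | nil =>
    rw [cs.wordProd_nil, mulHyp_one cs hT, mulHyp_one cs hτε]
    simp
  | append_singleton ω i ih =>
    have hred' : cs.IsReduced ω := by
      have := hred.take ω.length
      simpa using this
    have hlen : cs.length (cs.wordProd ω * cs.simple i) = cs.length (cs.wordProd ω) + 1 := by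
      have h1 : cs.length (cs.wordProd (ω ++ [i])) = (ω ++ [i]).length := hred
      have h2 : cs.length (cs.wordProd ω) = ω.length := hred'
      rw [cs.wordProd_append, cs.wordProd_singleton] at h1
      rw [h1, h2]
      simp
    rw [cs.wordProd_append, cs.wordProd_singleton, mulHyp_simple_right hT hlen,
      mulHyp_simple_right hτε hlen, Units.val_mul, Units.val_mul, ← mul_assoc,
      ih hred', smul_mul_assoc, eigen_right hτε hT hq i, smul_smul, mul_comm]

lemma eigen_left_elt (hτε : MulHyp cs τε) (hT : MulHyp cs T) (hq : Quad cs τε T) (w : W) :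
    (T w : H) * Sym τε T = (τε w : K) • Sym τε T := by
  obtain ⟨ω, hred, rfl⟩ := cs.exists_reduced_word' w
  exact eigen_left_word hτε hT hq ω hred

lemma eigen_right_elt (hτε : MulHyp cs τε) (hT : MulHyp cs T) (hq : Quad cs τε T) (w : W) :
    Sym τε T * (T w : H) = (τε w : K) • Sym τε T := by
  obtain ⟨ω, hred, rfl⟩ := cs.exists_reduced_word' w
  exact eigen_right_word hτε hT hq ω hred

lemma sym_mul_sym (hτε : MulHyp cs τε) (hT : MulHyp cs T) (hq : Quad cs τε T) :
    Sym τε T * Sym τε T = (∑ w : W, ((τε w : K)) ^ 2) • Sym τε T := by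
  have : Sym τε T * Sym τε T = ∑ w : W, ((τε w : K) • (T w : H)) * Sym τε T := by
    rw [Sym, Finset.sum_mul]
  rw [this]
  have h2 : ∀ w : W, ((τε w : K) • (T w : H)) * Sym τε T = ((τε w : K) ^ 2) • Sym τε T := by
    intro w
    rw [smul_mul_assoc, eigen_left_elt hτε hT hq w, smul_smul, sq]
  rw [Finset.sum_congr rfl (fun w _ => h2 w), ← Finset.sum_smul]

lemma sym_mul_inv_elt (hτε : MulHyp cs τε) (hT : MulHyp cs T) (hq : Quad cs τε T) (w : W) :
    Sym τε T * (((T w)⁻¹ : Hˣ) : H) = (((τε w)⁻¹ : Kˣ) : K) • Sym τε T := by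
  have h1 : Sym τε T = ((τε w : K)) • (Sym τε T * (((T w)⁻¹ : Hˣ) : H)) := by
    calc Sym τε T = (Sym τε T * (T w : H)) * (((T w)⁻¹ : Hˣ) : H) := by
          rw [mul_assoc, ← Units.val_mul, mul_inv_cancel, Units.val_one, mul_one]
      _ = ((τε w : K) • Sym τε T) * (((T w)⁻¹ : Hˣ) : H) := by
          rw [eigen_right_elt hτε hT hq w]
      _ = ((τε w : K)) • (Sym τε T * (((T w)⁻¹ : Hˣ) : H)) := by rw [smul_mul_assoc]
  have h2 := congrArg (fun z => (((τε w)⁻¹ : Kˣ) : K) • z) h1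
  rw [smul_smul, ← Units.val_mul, inv_mul_cancel, Units.val_one, one_smul] at h2
  exact h2.symm

lemma st_sym (hτε : MulHyp cs τε) (hT : MulHyp cs T) (hq : Quad cs τε T)
    {u : W} (hu : ∀ w : W, cs.length w ≤ cs.length u)
    (σK : K →+* K) (st : H → H)
    (hadd : ∀ x y : H, st (x + y) = st x + st y)
    (hsmul : ∀ (c : K) (x : H), st (algebraMap K H c * x) = algebraMap K H (σK c) * st x)
    (hστε : ∀ w : W, σK ((τε w : K)) = (((τε w)⁻¹ : Kˣ) : K))
    (hstT : ∀ w : W, st ((T w : H)) = (((T w)⁻¹ : Hˣ) : H)) :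
    st (Sym τε T) = (((τε u)⁻¹ : Kˣ) : K) • ((((τε u)⁻¹ : Kˣ) : K) • Sym τε T) := by
  classical
  set stA : H →+ H := AddMonoidHom.mk' st hadd with hstA
  have hst_smul : ∀ (c : K) (x : H), st (c • x) = σK c • st x := by
    intro c x
    rw [Algebra.smul_def, hsmul, ← Algebra.smul_def]
  have hstSym : st (Sym τε T)
      = ∑ w : W, (((τε w)⁻¹ : Kˣ) : K) • (((T w)⁻¹ : Hˣ) : H) := by
    have : st (Sym τε T) = stA (Sym τε T) := rfl
    rw [this, Sym, map_sum]
    apply Finset.sum_congr rfl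
    intro w _
    have : stA ((τε w : K) • (T w : H)) = st ((τε w : K) • (T w : H)) := rfl
    rw [this, hst_smul, hστε, hstT]
  have hterm : ∀ w : W, (((τε w)⁻¹ : Kˣ) : K) • (((T w)⁻¹ : Hˣ) : H)
      = (((τε u)⁻¹ : Kˣ) : K) •
        ((τε (w⁻¹ * u) : K) • ((T (w⁻¹ * u) : H) * (((T u)⁻¹ : Hˣ) : H))) := by
    intro w
    have hwv : w * (w⁻¹ * u) = u := by group
    have hlen : cs.length (w * (w⁻¹ * u)) = cs.length w + cs.length (w⁻¹ * u) := by
      rw [hwv, ← length_add_of_max' cs hu w]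
    have hτu : τε u = τε w * τε (w⁻¹ * u) := by
      have := hτε w (w⁻¹ * u) hlen; rw [hwv] at this; exact this
    have hTu : T u = T w * T (w⁻¹ * u) := by
      have := hT w (w⁻¹ * u) hlen; rw [hwv] at this; exact this
    have hτwinv : (τε w)⁻¹ = τε (w⁻¹ * u) * (τε u)⁻¹ := by
      rw [hτu, mul_inv_rev, ← mul_assoc, mul_inv_cancel, one_mul]
    have hTwinv : (T w)⁻¹ = T (w⁻¹ * u) * (T u)⁻¹ := by
      rw [hTu, mul_inv_rev, ← mul_assoc, mul_inv_cancel, one_mul]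
    rw [congrArg Units.val hτwinv, congrArg Units.val hTwinv, Units.val_mul, Units.val_mul]
    rw [smul_smul, mul_comm]
  have hreindex : ∑ w : W, (τε (w⁻¹ * u) : K) • ((T (w⁻¹ * u) : H) * (((T u)⁻¹ : Hˣ) : H))
      = Sym τε T * (((T u)⁻¹ : Hˣ) : H) := by
    rw [Sym, Finset.sum_mul]
    apply Finset.sum_equiv ((Equiv.inv W).trans (Equiv.mulRight u))
    · intro w; simp
    · intro w _
      simp only [Equiv.trans_apply, Equiv.inv_apply, Equiv.coe_mulRight]
      rw [smul_mul_assoc]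
  rw [hstSym, Finset.sum_congr rfl (fun w _ => hterm w), ← Finset.smul_sum, hreindex,
    sym_mul_inv_elt hτε hT hq u]

lemma sigma_inv (σK : K →+* K) (u : Kˣ) (h : σK (u : K) = ((u⁻¹ : Kˣ) : K)) :
    σK ((u⁻¹ : Kˣ) : K) = (u : K) := by
  rw [Units.val_inv_eq_inv_val, map_inv₀, h, Units.val_inv_eq_inv_val, inv_inv]

lemma sigma_tau_eps (hτε : MulHyp cs τε) (σK : K →+* K)
    (hsimple : ∀ j : J, σK ((τε (cs.simple j) : K)) = (((τε (cs.simple j))⁻¹ : Kˣ) : K))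
    (w : W) : σK ((τε w : K)) = (((τε w)⁻¹ : Kˣ) : K) := by
  obtain ⟨ω, hred, rfl⟩ := cs.exists_reduced_word' w
  clear hred
  induction ω with
  | nil =>
    rw [cs.wordProd_nil, mulHyp_one cs hτε]
    simp
  | cons i ω ih =>
    rw [cs.wordProd_cons]
    rcases cs.length_simple_mul (cs.wordProd ω) i with hlen | hlen
    · rw [mulHyp_simple_left hτε hlen, mul_inv_rev, Units.val_mul,
        map_mul, ih, hsimple, Units.val_mul, mul_comm]
    · have hcan : cs.simple i * (cs.simple i * cs.wordProd ω) = cs.wordProd ω :=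
        cs.simple_mul_simple_cancel_left i
      have hlen2 : cs.length (cs.simple i * (cs.simple i * cs.wordProd ω))
          = cs.length (cs.simple i * cs.wordProd ω) + 1 := by
        rw [hcan]; omega
      have hmul : τε (cs.wordProd ω) = τε (cs.simple i) * τε (cs.simple i * cs.wordProd ω) := by
        have := mulHyp_simple_left hτε hlen2
        rw [hcan] at this; exact this
      have h1 : τε (cs.simple i * cs.wordProd ω)
          = (τε (cs.simple i))⁻¹ * τε (cs.wordProd ω) := by
        rw [hmul, ← mul_assoc, inv_mul_cancel, one_mul]
      rw [h1, Units.val_mul, map_mul, sigma_inv σK _ (hsimple i), ih,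
        mul_inv_rev, inv_inv, Units.val_mul, mul_comm]

end Hecke

end CoxSym

end Aux

/-- `(U^{(ε)})² = (W_J(τ^{(ε)2})/τ^{(ε)}(w_J)) · U^{(ε)}`; moreover, for any
involutive ring anti-automorphism `*` of `H`, semilinear over an involutive field
automorphism `*` of `K` with `τ(w)* = τ(w)⁻¹`, such that `T(w)* = T(w)⁻¹` for all
`w ∈ W_J`, one has `(U^{(ε)})* = U^{(ε)}`. -/
theorem symmetriser_idempotent_and_selfadjoint
    {J : Type*} {W : Type*} [Group W] [Fintype W] {M : CoxeterMatrix J}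
    (cs : CoxeterSystem M W)
    {K : Type*} [Field K] {H : Type*} [Ring H] [Algebra K H]
    (τ : W → Kˣ)
    (hτ : ∀ v w : W, cs.length (v * w) = cs.length v + cs.length w → τ (v * w) = τ v * τ w)
    (T : W → Hˣ)
    (hT : ∀ v w : W, cs.length (v * w) = cs.length v + cs.length w → T (v * w) = T v * T w)
    (hquad : ∀ j : J, ((T (cs.simple j) : H) - algebraMap K H ((τ (cs.simple j) : K))) *
      ((T (cs.simple j) : H) + algebraMap K H (((τ (cs.simple j))⁻¹ : Kˣ) : K)) = 0)
    (ε : W →* ℤˣ)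
    (τε : W → Kˣ)
    (hτε : ∀ v w : W, cs.length (v * w) = cs.length v + cs.length w → τε (v * w) = τε v * τε w)
    (hτεs : ∀ j : J, τε (cs.simple j) =
      if ε (cs.simple j) = 1 then τ (cs.simple j) else -(τ (cs.simple j))⁻¹)
    (wJ : W) (hwJ : ∀ w : W, cs.length w ≤ cs.length wJ)
    (U : H)
    (hU : U = algebraMap K H (((τε wJ)⁻¹ : Kˣ) : K) *
      ∑ w : W, algebraMap K H ((τε w : K)) * (T w : H)) :
    U * U = algebraMap K H ((∑ w : W, ((τε w : K)) ^ 2) * (((τε wJ)⁻¹ : Kˣ) : K)) * U ∧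
    (∀ (σ : K →+* K) (st : H → H),
      Function.Involutive σ →
      (∀ x y : H, st (x + y) = st x + st y) →
      (∀ x y : H, st (x * y) = st y * st x) →
      Function.Involutive st →
      (∀ (c : K) (x : H), st (algebraMap K H c * x) = algebraMap K H (σ c) * st x) →
      (∀ w : W, σ ((τ w : K)) = (((τ w)⁻¹ : Kˣ) : K)) →
      (∀ w : W, st ((T w : H)) = (((T w)⁻¹ : Hˣ) : H)) →
      st U = U) := by
  classical
  have hτεM : CoxSym.MulHyp cs τε := hτε
  have hTM : CoxSym.MulHyp cs T := hT
  -- quadratic relation in `τε` form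
  have hq : CoxSym.Quad cs τε T := by
    intro j
    set x : H := (T (cs.simple j) : H) with hx
    set a : K := (τ (cs.simple j) : K) with ha
    set b : K := (((τ (cs.simple j))⁻¹ : Kˣ) : K) with hb
    have hexp : (x - algebraMap K H a) * (x + algebraMap K H b)
        = x * x + b • x - a • x - algebraMap K H (a * b) := by
      rw [sub_mul, mul_add, mul_add, map_mul]
      have h1 : x * algebraMap K H b = b • x := by
        rw [← Algebra.commutes, ← Algebra.smul_def]
      have h2 : algebraMap K H a * x = a • x := (Algebra.smul_def a x).symm
      rw [h1, h2]
      abel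
    have hab : a * b = 1 := by
      rw [ha, hb, ← Units.val_mul, mul_inv_cancel, Units.val_one]
    have hzero := hquad j
    rw [hexp, hab, map_one] at hzero
    have hxx : x * x = 1 + (a - b) • x := by
      have h3 : x * x + b • x - a • x = 1 := by
        have := sub_eq_zero.mp hzero
        exact this
      calc x * x = (x * x + b • x - a • x) + (a • x - b • x) := by abel
        _ = 1 + (a • x - b • x) := by rw [h3]
        _ = 1 + (a - b) • x := by rw [sub_smul]
    have hcd : (τε (cs.simple j) : K) - (((τε (cs.simple j))⁻¹ : Kˣ) : K) = a - b := by
      rcases ite_eq_or_eq (ε (cs.simple j) = 1) (τ (cs.simple j)) (-(τ (cs.simple j))⁻¹)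
        with hc | hc <;> rw [hτεs j] at *
      · rw [hc]
      · rw [hc, ha, hb]
        have e1 : ((-(τ (cs.simple j))⁻¹ : Kˣ) : K) = -(((τ (cs.simple j))⁻¹ : Kˣ) : K) :=
          Units.val_neg _
        have e2 : (((-(τ (cs.simple j))⁻¹ : Kˣ)⁻¹ : Kˣ) : K) = -((τ (cs.simple j) : K)) := by
          rw [Units.val_inv_eq_inv_val, e1, Units.val_inv_eq_inv_val, inv_neg, inv_inv]
        rw [e1, e2]
        ring
    rw [hxx, hcd]
  -- identify U with the scalar multiple of Sym
  have hUS : U = (((τε wJ)⁻¹ : Kˣ) : K) • CoxSym.Sym τε T := by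
    rw [hU, CoxSym.Sym, ← Algebra.smul_def]
    congr 1
    apply Finset.sum_congr rfl
    intro w _
    rw [← Algebra.smul_def]
  constructor
  · -- part 1
    rw [hUS, smul_mul_assoc, mul_smul_comm, CoxSym.sym_mul_sym hτεM hTM hq,
      ← Algebra.smul_def]
    match_scalars
    ring
  · -- part 2
    intro σ st hσinv hadd hmul hstinv hsmul hστ hstT
    have hsimple : ∀ j : J, σ ((τε (cs.simple j) : K)) = (((τε (cs.simple j))⁻¹ : Kˣ) : K) := by
      intro j
      rcases ite_eq_or_eq (ε (cs.simple j) = 1) (τ (cs.simple j)) (-(τ (cs.simple j))⁻¹)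
        with hc | hc <;> rw [hτεs j, hc]
      · exact hστ (cs.simple j)
      · have e1 : ((-(τ (cs.simple j))⁻¹ : Kˣ) : K) = -(((τ (cs.simple j))⁻¹ : Kˣ) : K) :=
          Units.val_neg _
        have e2 : (((-(τ (cs.simple j))⁻¹ : Kˣ)⁻¹ : Kˣ) : K) = -((τ (cs.simple j) : K)) := by
          rw [Units.val_inv_eq_inv_val, e1, Units.val_inv_eq_inv_val, inv_neg, inv_inv]
        rw [e1, e2, map_neg, CoxSym.sigma_inv σ _ (hστ (cs.simple j))]
    have hστε : ∀ w : W, σ ((τε w : K)) = (((τε w)⁻¹ : Kˣ) : K) :=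
      CoxSym.sigma_tau_eps hτεM σ hsimple
    have hst : st (CoxSym.Sym τε T) = (((τε wJ)⁻¹ : Kˣ) : K) •
        ((((τε wJ)⁻¹ : Kˣ) : K) • CoxSym.Sym τε T) :=
      CoxSym.st_sym hτεM hTM hq hwJ σ st hadd hsmul hστε hstT
    have hσc : σ (((τε wJ)⁻¹ : Kˣ) : K) = ((τε wJ) : K) :=
      CoxSym.sigma_inv σ _ (hστε wJ)
    rw [hUS, Algebra.smul_def, hsmul, ← Algebra.smul_def, hσc, hst,
      smul_smul, smul_smul, ← Units.val_mul, ← Units.val_mul]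
    rw [show τε wJ * (τε wJ)⁻¹ * (τε wJ)⁻¹ = (τε wJ)⁻¹ by
      rw [mul_inv_cancel, one_mul]]
    exact Algebra.smul_def _ _
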